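/- Let K = ℚ(√D) with D ≥ 2 squarefree and (β_j) the ordered sequence of indecomposables with v_jβ_j = β_{j-1} + β_{j+1}. For α = 4β_j: if v_j ≥ 5 then p_K(α) = 5; if v_j = 4 then p_K(α) = 6; if v_j = 3 then p_K(α) ≥ 8; and if v_j = 2 then p_K(α) ≥ 16. -/

import Mathlib

noncomputable section

/-- `ω_D`: the standard generator of the ring of integers of `ℚ(√D)`. -/
def omegaD (D : ℕ) : ℝ := if D % 4 = 1 then (1 + Real.sqrt D) / 2 else Real.sqrt D

/-- The Galois conjugate of `ω_D`. -/
def omegaD' (D : ℕ) : ℝ := if D % 4 = 1 then (1 - Real.sqrt D) / 2 else -Real.sqrt D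

/-- Elements of `O_K` in coordinates: `(x, y)` represents `x + y·ω_D`. -/
abbrev OK : Type := ℤ × ℤ

/-- First real embedding. -/
def emb1 (D : ℕ) (a : OK) : ℝ := a.1 + a.2 * omegaD D

/-- Second real embedding (Galois conjugate). -/
def emb2 (D : ℕ) (a : OK) : ℝ := a.1 + a.2 * omegaD' D

/-- Galois conjugation on `O_K`. -/
def conjOK (D : ℕ) (a : OK) : OK := (a.1 + (if D % 4 = 1 then (1 : ℤ) else 0) * a.2, -a.2)

/-- Total positivity. -/
def TotPos (D : ℕ) (a : OK) : Prop := 0 < emb1 D a ∧ 0 < emb2 D a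

/-- The field norm. -/
def Nm (D : ℕ) (a : OK) : ℝ := emb1 D a * emb2 D a

/-- Indecomposability: totally positive and not a sum of two totally positive elements. -/
def Indec (D : ℕ) (a : OK) : Prop :=
  TotPos D a ∧ ¬ ∃ b c : OK, TotPos D b ∧ TotPos D c ∧ a = b + c

/-- Number of partitions of `α` into indecomposable parts (`p_K(α|I)`). -/
def pKI (D : ℕ) (α : OK) : ℕ :=
  Set.ncard {s : Multiset OK | (∀ x ∈ s, Indec D x) ∧ s.sum = α}

/-- Number of partitions of `α` into totally positive parts (`p_K(α)`). -/
def pK (D : ℕ) (α : OK) : ℕ :=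
  Set.ncard {s : Multiset OK | (∀ x ∈ s, TotPos D x) ∧ s.sum = α}

/-- Discriminant of `ℚ(√D)`. -/
def disc (D : ℕ) : ℕ := if D % 4 = 1 then D else 4 * D

/-- The ordered two-sided sequence of indecomposables together with
the coefficients `v j ≥ 2` from the Hejda–Kala relation `v_j β_j = β_{j-1} + β_{j+1}`. -/
structure BetaSeq (D : ℕ) (β : ℤ → OK) (v : ℤ → ℤ) : Prop where
  indec : ∀ j, Indec D (β j)
  surj : ∀ a : OK, Indec D a → ∃ j, β j = a
  mono : StrictMono fun j => emb1 D (β j)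
  zero : β 0 = (1, 0)
  conj_eq : ∀ j, β (-j) = conjOK D (β j)
  v_two_le : ∀ j, 2 ≤ v j
  v_symm : ∀ j, v (-j) = v j
  rel : ∀ j, v j • β j = β (j - 1) + β (j + 1)

/-- The continued fraction data of `ω_D = [⌈u₀/2⌉, \overline{u₁, …, u_s}]` (with `u_s = u_0`),
with tails `γ_0 = ω_D`, `γ_i = [u_i, u_{i+1}, …]` for `i ≥ 1`. -/
structure CFData (D : ℕ) (u : ℕ → ℕ) (γ : ℕ → ℝ) : Prop where
  gamma_zero : γ 0 = omegaD D
  u_zero : (u 0 : ℤ) = 2 * ⌊omegaD D⌋ - (if D % 4 = 1 then 1 else 0)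
  head : omegaD D = (⌊omegaD D⌋ : ℝ) + 1 / γ 1
  step : ∀ i, 1 ≤ i → γ i = u i + 1 / γ (i + 1)
  one_lt : ∀ i, 1 ≤ i → 1 < γ i
  floor_eq : ∀ i, 1 ≤ i → (u i : ℤ) = ⌊γ i⌋
  period : ∃ s, 1 ≤ s ∧ u s = u 0 ∧ ∀ i, 1 ≤ i → u (i + s) = u i

/-- The convergents `α_i = p_i + q_i ξ_D`, indexed by `i ≥ -1`. -/
structure ConvData (D : ℕ) (u : ℕ → ℕ) (a : ℤ → OK) : Prop where
  neg_one : a (-1) = (1, 0)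
  zero : a 0 = (⌊omegaD D⌋, 0) + (if D % 4 = 1 then ((-1 : ℤ), (1 : ℤ)) else (0, 1))
  recur : ∀ i : ℤ, -1 ≤ i → a (i + 2) = (u (i + 2).toNat : ℤ) • a (i + 1) + a i

/-- Semiconvergents `α_{i,r} = α_i + r·α_{i+1}`. -/
def semiconv (a : ℤ → OK) (i r : ℤ) : OK := a i + r • a (i + 1)


-- basics
def e1hom (D : ℕ) : OK →+ ℝ := AddMonoidHom.mk' (emb1 D) (by
  intro a b; simp [emb1, Prod.fst_add, Prod.snd_add]; push_cast; ring)
def e2hom (D : ℕ) : OK →+ ℝ := AddMonoidHom.mk' (emb2 D) (by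
  intro a b; simp [emb2, Prod.fst_add, Prod.snd_add]; push_cast; ring)

lemma e1hom_apply (D : ℕ) (a : OK) : e1hom D a = emb1 D a := rfl
lemma e2hom_apply (D : ℕ) (a : OK) : e2hom D a = emb2 D a := rfl

lemma emb1_add (D : ℕ) (a b : OK) : emb1 D (a + b) = emb1 D a + emb1 D b :=
  (e1hom D).map_add a b
lemma emb2_add (D : ℕ) (a b : OK) : emb2 D (a + b) = emb2 D a + emb2 D b :=
  (e2hom D).map_add a b
lemma emb1_zsmul (D : ℕ) (n : ℤ) (a : OK) : emb1 D (n • a) = n * emb1 D a := by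
  rw [show n • a = n • a from rfl, ← e1hom_apply, AddMonoidHom.map_zsmul, e1hom_apply,
    zsmul_eq_mul]
lemma emb2_zsmul (D : ℕ) (n : ℤ) (a : OK) : emb2 D (n • a) = n * emb2 D a := by
  rw [← e2hom_apply, AddMonoidHom.map_zsmul, e2hom_apply, zsmul_eq_mul]
lemma emb1_nsmul (D : ℕ) (n : ℕ) (a : OK) : emb1 D (n • a) = n * emb1 D a := by
  rw [← e1hom_apply, AddMonoidHom.map_nsmul, e1hom_apply, nsmul_eq_mul]
lemma emb2_nsmul (D : ℕ) (n : ℕ) (a : OK) : emb2 D (n • a) = n * emb2 D a := by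
  rw [← e2hom_apply, AddMonoidHom.map_nsmul, e2hom_apply, nsmul_eq_mul]

lemma totpos_add {D : ℕ} {a b : OK} (ha : TotPos D a) (hb : TotPos D b) :
    TotPos D (a + b) := by
  refine ⟨?_, ?_⟩ <;> rw [show a + b = a + b from rfl]
  · rw [emb1_add]; exact add_pos ha.1 hb.1
  · rw [emb2_add]; exact add_pos ha.2 hb.2

lemma emb2_conj (D : ℕ) (a : OK) : emb2 D a = emb1 D (conjOK D a) := by
  by_cases h : D % 4 = 1 <;> simp [emb1, emb2, conjOK, omegaD, omegaD', h] <;> push_cast <;> ring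

section Beta
variable {D : ℕ} {β : ℤ → OK} {v : ℤ → ℤ} (hβ : BetaSeq D β v)
include hβ

lemma B1_pos (k : ℤ) : 0 < emb1 D (β k) := (hβ.indec k).1.1
lemma B2_pos (k : ℤ) : 0 < emb2 D (β k) := (hβ.indec k).1.2

lemma B2_eq (k : ℤ) : emb2 D (β k) = emb1 D (β (-k)) := by
  rw [hβ.conj_eq k, emb2_conj]

lemma B1_lt {k l : ℤ} (h : k < l) : emb1 D (β k) < emb1 D (β l) := hβ.mono h

lemma B2_lt {k l : ℤ} (h : k < l) : emb2 D (β l) < emb2 D (β k) := by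
  rw [B2_eq hβ, B2_eq hβ]; exact hβ.mono (by omega)

lemma rel1 (k : ℤ) : (v k : ℝ) * emb1 D (β k) = emb1 D (β (k-1)) + emb1 D (β (k+1)) := by
  have := congrArg (emb1 D) (hβ.rel k)
  rwa [emb1_zsmul, emb1_add] at this

lemma rel2 (k : ℤ) : (v k : ℝ) * emb2 D (β k) = emb2 D (β (k-1)) + emb2 D (β (k+1)) := by
  have := congrArg (emb2 D) (hβ.rel k)
  rwa [emb2_zsmul, emb2_add] at this

end Beta

/-- the convexity functional at center j -/
def gfun (D : ℕ) (β : ℤ → OK) (j : ℤ) (k : ℤ) : ℝ :=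
  (emb2 D (β (j-1)) - emb2 D (β (j+1))) * emb1 D (β k)
  + (emb1 D (β (j+1)) - emb1 D (β (j-1))) * emb2 D (β k)

section G
variable {D : ℕ} {β : ℤ → OK} {v : ℤ → ℤ} (hβ : BetaSeq D β v) (j : ℤ)
include hβ

lemma lam_pos : 0 < emb2 D (β (j-1)) - emb2 D (β (j+1)) :=
  sub_pos.2 (B2_lt hβ (by omega))
lemma mu_pos : 0 < emb1 D (β (j+1)) - emb1 D (β (j-1)) :=
  sub_pos.2 (B1_lt hβ (by omega))

lemma g_pos (k : ℤ) : 0 < gfun D β j k :=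
  add_pos (mul_pos (lam_pos hβ j) (B1_pos hβ k)) (mul_pos (mu_pos hβ j) (B2_pos hβ k))

omit hβ in
lemma g_symm : gfun D β j (j+1) = gfun D β j (j-1) := by unfold gfun; ring

lemma g_rel (k : ℤ) : (v k : ℝ) * gfun D β j k = gfun D β j (k-1) + gfun D β j (k+1) := by
  unfold gfun
  have h1 := rel1 hβ k; have h2 := rel2 hβ k
  linear_combination (emb2 D (β (j-1)) - emb2 D (β (j+1))) * h1
    + (emb1 D (β (j+1)) - emb1 D (β (j-1))) * h2

lemma g_conv (k : ℤ) : 2 * gfun D β j k ≤ gfun D β j (k-1) + gfun D β j (k+1) := by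
  rw [← g_rel hβ]
  have h2 : (2:ℝ) ≤ (v k : ℝ) := by exact_mod_cast hβ.v_two_le k
  nlinarith [g_pos hβ j k]

lemma g_center : (v j : ℝ) * gfun D β j j = 2 * gfun D β j (j-1) := by
  have h := g_rel hβ j j
  rw [g_symm (D:=D) (β:=β) j] at h; linarith

lemma g_center_le : gfun D β j j ≤ gfun D β j (j-1) := by
  have h := g_center hβ j
  have h2 : (2:ℝ) ≤ (v j : ℝ) := by exact_mod_cast hβ.v_two_le j
  nlinarith [g_pos hβ j j]

/-- increments are monotone -/
lemma d_mono {k l : ℤ} (h : k ≤ l) :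
    gfun D β j (k+1) - gfun D β j k ≤ gfun D β j (l+1) - gfun D β j l := by
  refine Int.le_induction (motive := fun l _ => gfun D β j (k+1) - gfun D β j k
    ≤ gfun D β j (l+1) - gfun D β j l) (le_refl _) ?_ l h
  intro n _ ih
  have hc := g_conv hβ j (n+1)
  have e : n + 1 - 1 = n := by ring
  rw [e] at hc
  linarith

lemma d_nonneg_up {l : ℤ} (h : j ≤ l) : 0 ≤ gfun D β j (l+1) - gfun D β j l := by
  have hm := d_mono hβ j h
  have h0 : 0 ≤ gfun D β j (j+1) - gfun D β j j := by
    have := g_center_le hβ j; rw [g_symm (D:=D) (β:=β) j]; linarith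
  linarith

lemma d_nonpos_down {l : ℤ} (h : l ≤ j - 1) : gfun D β j (l+1) - gfun D β j l ≤ 0 := by
  have hm := d_mono hβ j h
  have e : j - 1 + 1 = j := by ring
  rw [e] at hm
  have := g_center_le hβ j
  linarith

lemma g_ge_up {k : ℤ} (h : j + 1 ≤ k) : gfun D β j (j-1) ≤ gfun D β j k := by
  refine Int.le_induction (motive := fun k _ => gfun D β j (j-1) ≤ gfun D β j k)
    (le_of_eq (g_symm (D:=D) (β:=β) j).symm) ?_ k h
  intro n hn ih
  have := d_nonneg_up hβ j (show j ≤ n by omega)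
  linarith

lemma g_ge_down {k : ℤ} (h : k ≤ j - 1) : gfun D β j (j-1) ≤ gfun D β j k := by
  refine Int.le_induction_down (motive := fun k _ => gfun D β j (j-1) ≤ gfun D β j k)
    (le_refl _) ?_ k h
  intro n hn ih
  have := d_nonpos_down hβ j (show n - 1 ≤ j - 1 by omega)
  have e : n - 1 + 1 = n := by ring
  rw [e] at this
  linarith

lemma g_ge {k : ℤ} (h : k ≠ j) : gfun D β j (j-1) ≤ gfun D β j k := by
  rcases lt_or_gt_of_ne h with h' | h'
  · exact g_ge_down hβ j (by omega)
  · exact g_ge_up hβ j (by omega)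

lemma g_ge_far_up {k : ℤ} (h : j + 2 ≤ k) :
    2 * gfun D β j (j-1) - gfun D β j j ≤ gfun D β j k := by
  refine Int.le_induction (motive := fun k _ => 2 * gfun D β j (j-1) - gfun D β j j ≤ gfun D β j k)
    ?_ ?_ k h
  · have hm := d_mono hβ j (show j ≤ j + 1 by omega)
    have e1 := g_symm (D:=D) (β:=β) j
    have e : j + 1 + 1 = j + 2 := by ring
    rw [e] at hm
    linarith
  · intro n hn ih
    have := d_nonneg_up hβ j (show j ≤ n by omega)
    linarith

lemma g_ge_far_down {k : ℤ} (h : k ≤ j - 2) :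
    2 * gfun D β j (j-1) - gfun D β j j ≤ gfun D β j k := by
  refine Int.le_induction_down (motive := fun k _ => 2 * gfun D β j (j-1) - gfun D β j j ≤ gfun D β j k)
    ?_ ?_ k h
  · have hm := d_mono hβ j (show j - 2 ≤ j - 1 by omega)
    have e : j - 2 + 1 = j - 1 := by ring
    have e2 : j - 1 + 1 = j := by ring
    rw [e, e2] at hm
    linarith
  · intro n hn ih
    have := d_nonpos_down hβ j (show n - 1 ≤ j - 1 by omega)
    have e : n - 1 + 1 = n := by ring
    rw [e] at this
    linarith

lemma g_ge_far {k : ℤ} (h1 : k ≤ j - 2 ∨ j + 2 ≤ k) :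
    2 * gfun D β j (j-1) - gfun D β j j ≤ gfun D β j k := by
  rcases h1 with h | h
  · exact g_ge_far_down hβ j h
  · exact g_ge_far_up hβ j h

end G

/-- the trace, as an integer-valued additive hom -/
def trOK (D : ℕ) : OK →+ ℤ := AddMonoidHom.mk'
  (fun a => 2 * a.1 + (if D % 4 = 1 then 1 else 0) * a.2) (by
    intro a b; by_cases h : D % 4 = 1 <;> simp [Prod.fst_add, Prod.snd_add, h] <;> ring)

lemma tr_eq (D : ℕ) (a : OK) : (trOK D a : ℝ) = emb1 D a + emb2 D a := by
  by_cases h : D % 4 = 1 <;> simp [trOK, emb1, emb2, omegaD, omegaD', h, AddMonoidHom.mk'] <;>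
    push_cast <;> ring

lemma tr_pos {D : ℕ} {a : OK} (h : TotPos D a) : 1 ≤ trOK D a := by
  have : (0:ℝ) < trOK D a := by rw [tr_eq]; exact add_pos h.1 h.2
  have : (0:ℤ) < trOK D a := by exact_mod_cast this
  omega

/-- every totally positive element decomposes into indecomposables -/
lemma exists_indec_decomp {D : ℕ} :
    ∀ (n : ℕ) (x : OK), TotPos D x → (trOK D x).toNat = n →
    ∃ m : Multiset OK, (∀ y ∈ m, Indec D y) ∧ m.sum = x ∧ m ≠ 0 := by
  intro n
  induction n using Nat.strong_induction_on with
  | _ n ih =>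
    intro x hx hn
    by_cases hi : Indec D x
    · exact ⟨{x}, by simpa using hi, by simp, by simp⟩
    · have : ∃ b c : OK, TotPos D b ∧ TotPos D c ∧ x = b + c := by
        by_contra hc
        exact hi ⟨hx, hc⟩
      obtain ⟨b, c, hb, hc, hbc⟩ := this
      have htr : trOK D x = trOK D b + trOK D c := by rw [hbc]; exact (trOK D).map_add b c
      have h1 := tr_pos hb
      have h2 := tr_pos hc
      have hxn : (trOK D x).toNat = n := hn
      have hb' : (trOK D b).toNat < n := by omega
      have hc' : (trOK D c).toNat < n := by omega
      obtain ⟨mb, hmb, hsb, _⟩ := ih _ hb' b hb rfl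
      obtain ⟨mc, hmc, hsc, hne⟩ := ih _ hc' c hc rfl
      refine ⟨mb + mc, ?_, by rw [Multiset.sum_add, hsb, hsc, hbc], ?_⟩
      · intro y hy; rcases Multiset.mem_add.mp hy with h | h
        · exact hmb y h
        · exact hmc y h
      · intro h0
        apply hne
        have := congrArg Multiset.card h0
        simp at this
        exact this.2

lemma totpos_decomp {D : ℕ} (x : OK) (hx : TotPos D x) :
    ∃ m : Multiset OK, (∀ y ∈ m, Indec D y) ∧ m.sum = x ∧ m ≠ 0 :=
  exists_indec_decomp _ x hx rfl

/-- refine a multiset of totally positive elements into indecomposable pieces -/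
lemma refine_multiset {D : ℕ} (s : Multiset OK) (hs : ∀ x ∈ s, TotPos D x) :
    ∃ t : Multiset (Multiset OK), (∀ m ∈ t, (∀ y ∈ m, Indec D y) ∧ m ≠ 0) ∧
      t.map Multiset.sum = s := by
  induction s using Multiset.induction with
  | empty => exact ⟨0, by simp, by simp⟩
  | cons x s ih =>
    obtain ⟨t, ht, hts⟩ := ih (fun y hy => hs y (Multiset.mem_cons_of_mem hy))
    obtain ⟨m, hm, hsum, hne⟩ := totpos_decomp x (hs x (Multiset.mem_cons_self x s))
    refine ⟨m ::ₘ t, ?_, by simp [hts, hsum]⟩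
    intro m' hm'
    rcases Multiset.mem_cons.mp hm' with h | h
    · exact h ▸ ⟨hm, hne⟩
    · exact ht m' h

lemma mem_le_join {α : Type*} {m : Multiset α} {t : Multiset (Multiset α)}
    (h : m ∈ t) : m ≤ t.join := by
  induction t using Multiset.induction with
  | empty => simp at h
  | cons a t ih =>
    rw [Multiset.join_cons]
    rcases Multiset.mem_cons.mp h with h | h
    · exact h ▸ Multiset.le_add_right _ _
    · exact le_trans (ih h) (Multiset.le_add_left _ _)

/-- a multiset of indecomposables is the image of a multiset of indices -/
lemma exists_index_multiset {D : ℕ} {β : ℤ → OK} {v : ℤ → ℤ} (hβ : BetaSeq D β v)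
    (m : Multiset OK) (hm : ∀ y ∈ m, Indec D y) :
    ∃ km : Multiset ℤ, km.map β = m := by
  induction m using Multiset.induction with
  | empty => exact ⟨0, rfl⟩
  | cons x s ih =>
    obtain ⟨km, hkm⟩ := ih (fun y hy => hm y (Multiset.mem_cons_of_mem hy))
    obtain ⟨k, hk⟩ := hβ.surj x (hm x (Multiset.mem_cons_self x s))
    exact ⟨k ::ₘ km, by simp [hkm, hk]⟩

/-- card ≤ sum for multisets of positive integers -/
lemma card_le_sum_int {t : Multiset ℤ} (h : ∀ n ∈ t, 1 ≤ n) :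
    (Multiset.card t : ℤ) ≤ t.sum := by
  induction t using Multiset.induction with
  | empty => simp
  | cons a s ih =>
    have h1 := h a (Multiset.mem_cons_self a s)
    have h2 := ih (fun n hn => h n (Multiset.mem_cons_of_mem hn))
    simp only [Multiset.card_cons, Multiset.sum_cons]
    push_cast
    omega

section Classify
variable {D : ℕ} {β : ℤ → OK} {v : ℤ → ℤ} (hβ : BetaSeq D β v) (j : ℤ)
include hβ

/-- common scaffolding: from an indecomposable decomposition of `4 β_j`, extract the
count `a` of `β j`, the rest `rest`, and the key inequalities. -/
lemma classify_core (m : Multiset OK) (hm : ∀ y ∈ m, Indec D y)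
    (hsum : m.sum = (4:ℤ) • β j) :
    m = Multiset.replicate 4 (β j) ∨
    ∃ rest : Multiset ℤ, ∃ a : ℕ,
      (∀ k ∈ rest, k ≠ j) ∧
      m = Multiset.replicate a (β j) + rest.map β ∧
      1 ≤ Multiset.card rest ∧
      (Multiset.card rest : ℝ) * gfun D β j (j-1) + a * gfun D β j j ≤ 4 * gfun D β j j ∧
      (a : ℝ) * gfun D β j j + ((rest.map fun k => gfun D β j k).sum) = 4 * gfun D β j j ∧
      (a : ℝ) * emb1 D (β j) + ((rest.map fun k => emb1 D (β k)).sum) = 4 * emb1 D (β j) ∧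
      (a : ℝ) * emb2 D (β j) + ((rest.map fun k => emb2 D (β k)).sum) = 4 * emb2 D (β j) := by
  classical
  obtain ⟨km, hkm⟩ := exists_index_multiset hβ m hm
  set a : ℕ := km.count j with ha
  set rest : Multiset ℤ := km.filter (fun k => ¬ j = k) with hrest
  have hsplit : Multiset.replicate a j + rest = km := by
    rw [hrest, ha, ← Multiset.filter_eq km j]
    exact Multiset.filter_add_not (Eq j) km
  have hrestne : ∀ k ∈ rest, k ≠ j := by
    intro k hk
    have := Multiset.of_mem_filter hk
    omega
  -- real sums
  have hs1 : ((km.map fun k => emb1 D (β k)).sum) = 4 * emb1 D (β j) := by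
    have := congrArg (e1hom D) hsum
    rw [map_multiset_sum] at this
    rw [← hkm, Multiset.map_map] at this
    have h2 : e1hom D ((4:ℤ) • β j) = 4 * emb1 D (β j) := by
      rw [AddMonoidHom.map_zsmul, e1hom_apply, zsmul_eq_mul]; norm_num
    rw [h2] at this
    exact this
  have hs2 : ((km.map fun k => emb2 D (β k)).sum) = 4 * emb2 D (β j) := by
    have := congrArg (e2hom D) hsum
    rw [map_multiset_sum] at this
    rw [← hkm, Multiset.map_map] at this
    have h2 : e2hom D ((4:ℤ) • β j) = 4 * emb2 D (β j) := by
      rw [AddMonoidHom.map_zsmul, e2hom_apply, zsmul_eq_mul]; norm_num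
    rw [h2] at this
    exact this
  have hsg : ((km.map fun k => gfun D β j k).sum) = 4 * gfun D β j j := by
    unfold gfun
    rw [Multiset.sum_map_add, Multiset.sum_map_mul_left, Multiset.sum_map_mul_left, hs1, hs2]
    ring
  -- split the g-sum
  have hgsplit : (a : ℝ) * gfun D β j j + ((rest.map fun k => gfun D β j k).sum)
      = 4 * gfun D β j j := by
    rw [← hsg, ← hsplit, Multiset.map_add, Multiset.sum_add, Multiset.map_replicate,
      Multiset.sum_replicate, nsmul_eq_mul]
  have hrest_ge : (Multiset.card rest : ℝ) * gfun D β j (j-1)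
      ≤ ((rest.map fun k => gfun D β j k).sum) := by
    have := Multiset.card_nsmul_le_sum (s := rest.map fun k => gfun D β j k)
      (a := gfun D β j (j-1)) (by
        intro x hx
        obtain ⟨k, hk, rfl⟩ := Multiset.mem_map.mp hx
        exact g_ge hβ j (hrestne k hk))
    rw [Multiset.card_map] at this
    rw [← nsmul_eq_mul]
    exact this
  by_cases hr : rest = 0
  · left
    rw [hr, add_zero] at hsplit
    have hma : m = Multiset.replicate a (β j) := by
      rw [← hkm, ← hsplit, Multiset.map_replicate]
    have : (a : ℝ) * emb1 D (β j) = 4 * emb1 D (β j) := by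
      have := congrArg (e1hom D) hsum
      rw [map_multiset_sum] at this
      rw [hma] at hsum
      have h4 := congrArg (e1hom D) hsum
      rw [map_multiset_sum, Multiset.map_replicate, Multiset.sum_replicate] at h4
      have h5 : e1hom D ((4:ℤ) • β j) = 4 * emb1 D (β j) := by
        rw [AddMonoidHom.map_zsmul, e1hom_apply, zsmul_eq_mul]; norm_num
      rw [h5] at h4
      rw [← h4, nsmul_eq_mul, e1hom_apply]
    have ha4 : a = 4 := by
      have hb := B1_pos hβ j
      have : (a : ℝ) = 4 := by
        have hne : emb1 D (β j) ≠ 0 := ne_of_gt hb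
        field_simp at this
        linarith
      exact_mod_cast this
    rw [hma, ha4]
  · right
    have hsplit1 : (a : ℝ) * emb1 D (β j) + ((rest.map fun k => emb1 D (β k)).sum)
        = 4 * emb1 D (β j) := by
      rw [← hs1, ← hsplit, Multiset.map_add, Multiset.sum_add, Multiset.map_replicate,
        Multiset.sum_replicate, nsmul_eq_mul]
    have hsplit2 : (a : ℝ) * emb2 D (β j) + ((rest.map fun k => emb2 D (β k)).sum)
        = 4 * emb2 D (β j) := by
      rw [← hs2, ← hsplit, Multiset.map_add, Multiset.sum_add, Multiset.map_replicate,
        Multiset.sum_replicate, nsmul_eq_mul]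
    refine ⟨rest, a, hrestne, ?_, ?_, ?_, ?_, hsplit1, hsplit2⟩
    · rw [← hkm, ← hsplit, Multiset.map_add, Multiset.map_replicate]
    · have := Multiset.card_pos.2 hr
      omega
    · linarith
    · linarith

/-- the case of a single non-`β j` part is impossible -/
lemma no_single_rest {k : ℤ} (hk : k ≠ j) {a : ℕ} (ha : a ≤ 3)
    (h1 : (a : ℝ) * emb1 D (β j) + emb1 D (β k) = 4 * emb1 D (β j))
    (h2 : (a : ℝ) * emb2 D (β j) + emb2 D (β k) = 4 * emb2 D (β j)) : False := by
  have ha' : (a : ℝ) ≤ 3 := by exact_mod_cast ha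
  rcases lt_or_gt_of_ne hk with h | h
  · have hlt := B1_lt hβ h
    have hp := B1_pos hβ j
    nlinarith
  · have hlt := B2_lt hβ h
    have hp := B2_pos hβ j
    nlinarith

lemma classify5 (hv : 5 ≤ v j) (m : Multiset OK) (hm : ∀ y ∈ m, Indec D y)
    (hsum : m.sum = (4:ℤ) • β j) : m = Multiset.replicate 4 (β j) := by
  rcases classify_core hβ j m hm hsum with h | ⟨rest, a, hne, hmeq, hr1, hineq, hgeq, h1, h2⟩
  · exact h
  exfalso
  have hc := g_pos hβ j (j-1)
  have hgj := g_pos hβ j j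
  have hcen := g_center hβ j
  have hv' : (5:ℝ) ≤ (v j : ℝ) := by exact_mod_cast hv
  have hgle : 5 * gfun D β j j ≤ 2 * gfun D β j (j-1) := by nlinarith
  -- a ≤ 3
  have ha3 : a ≤ 3 := by
    by_contra hcon
    have : (4:ℝ) ≤ (a:ℝ) := by exact_mod_cast (by omega : 4 ≤ a)
    have hr1' : (1:ℝ) ≤ (Multiset.card rest : ℝ) := by exact_mod_cast hr1
    nlinarith
  -- card rest ≤ 1
  have hr2 : Multiset.card rest = 1 := by
    by_contra hcon
    have h2' : 2 ≤ Multiset.card rest := by omega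
    have : (2:ℝ) ≤ (Multiset.card rest : ℝ) := by exact_mod_cast h2'
    have ha0 : (0:ℝ) ≤ (a:ℝ) := by positivity
    nlinarith
  obtain ⟨k, hk⟩ := Multiset.card_eq_one.mp hr2
  rw [hk] at h1 h2
  simp only [Multiset.map_singleton, Multiset.sum_singleton] at h1 h2
  exact no_single_rest hβ j (hne k (by rw [hk]; exact Multiset.mem_singleton_self k)) ha3 h1 h2

lemma classify4 (hv : v j = 4) (m : Multiset OK) (hm : ∀ y ∈ m, Indec D y)
    (hsum : m.sum = (4:ℤ) • β j) :
    m = Multiset.replicate 4 (β j) ∨ m = {β (j-1), β (j+1)} := by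
  rcases classify_core hβ j m hm hsum with h | ⟨rest, a, hne, hmeq, hr1, hineq, hgeq, h1, h2⟩
  · exact Or.inl h
  have hc := g_pos hβ j (j-1)
  have hgj := g_pos hβ j j
  have hcen := g_center hβ j
  rw [hv] at hcen
  push_cast at hcen
  -- gfun j j = gfun j (j-1) / 2
  have hgjc : 2 * gfun D β j j = gfun D β j (j-1) := by linarith
  have ha0 : (0:ℝ) ≤ (a:ℝ) := by positivity
  have hr1' : (1:ℝ) ≤ (Multiset.card rest : ℝ) := by exact_mod_cast hr1
  -- card rest ≠ 1
  have hrne1 : Multiset.card rest ≠ 1 := by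
    intro hcard
    obtain ⟨k, hk⟩ := Multiset.card_eq_one.mp hcard
    rw [hk] at h1 h2
    simp only [Multiset.map_singleton, Multiset.sum_singleton] at h1 h2
    have ha3 : a ≤ 3 := by
      by_contra hcon
      have : (4:ℝ) ≤ (a:ℝ) := by exact_mod_cast (by omega : 4 ≤ a)
      rw [hcard] at hineq
      push_cast at hineq
      nlinarith
    exact no_single_rest hβ j (hne k (by rw [hk]; exact Multiset.mem_singleton_self k)) ha3 h1 h2
  -- so card rest = 2, a = 0
  have hr2 : Multiset.card rest = 2 ∧ a = 0 := by
    constructor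
    · by_contra hcon
      have h3 : 3 ≤ Multiset.card rest := by omega
      have : (3:ℝ) ≤ (Multiset.card rest : ℝ) := by exact_mod_cast h3
      nlinarith
    · by_contra hcon
      have : (1:ℝ) ≤ (a:ℝ) := by exact_mod_cast (by omega : 1 ≤ a)
      have h2' : 2 ≤ Multiset.card rest := by omega
      have h2'' : (2:ℝ) ≤ (Multiset.card rest : ℝ) := by exact_mod_cast h2'
      nlinarith
  obtain ⟨hcard2, ha0'⟩ := hr2
  obtain ⟨k, l, hkl⟩ := Multiset.card_eq_two.mp hcard2
  subst ha0'
  rw [hkl] at h1 h2 hgeq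
  simp only [Multiset.insert_eq_cons, Multiset.map_cons, Multiset.sum_cons,
    Multiset.map_singleton, Multiset.sum_singleton, Nat.cast_zero, zero_mul,
    zero_add] at h1 h2 hgeq
  have hkj : k ≠ j := hne k (by rw [hkl]; simp)
  have hlj : l ≠ j := hne l (by rw [hkl]; simp)
  -- k, l ∈ {j-1, j+1}
  have hgk := g_ge hβ j hkj
  have hgl := g_ge hβ j hlj
  have hnear : ∀ i : ℤ, i ≠ j → (i = j - 1 ∨ i = j + 1) ∨
      2 * gfun D β j (j-1) - gfun D β j j ≤ gfun D β j i := by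
    intro i hij
    by_cases hcon : i = j - 1 ∨ i = j + 1
    · exact Or.inl hcon
    · push_neg at hcon
      exact Or.inr (g_ge_far hβ j (by omega))
  have hknear : k = j - 1 ∨ k = j + 1 := by
    rcases hnear k hkj with h | h
    · exact h
    · exfalso; nlinarith
  have hlnear : l = j - 1 ∨ l = j + 1 := by
    rcases hnear l hlj with h | h
    · exact h
    · exfalso; nlinarith
  have hmeq' : m = {β k, β l} := by
    rw [hmeq, hkl]
    simp
  rcases hknear with hk1 | hk1 <;> rcases hlnear with hl1 | hl1
  · exfalso
    subst hk1; subst hl1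
    have := B1_lt hβ (show j - 1 < j by omega)
    have := B1_pos hβ j
    linarith
  · right; rw [hmeq', hk1, hl1]
  · right; rw [hmeq', hk1, hl1]; exact Multiset.cons_swap _ _ _
  · exfalso
    subst hk1; subst hl1
    have := B2_lt hβ (show j < j + 1 by omega)
    have := B2_pos hβ j
    linarith

end Classify

section NatPart

lemma msum_zero (t : Multiset ℕ) (h1 : ∀ n ∈ t, 1 ≤ n) (h : t.sum = 0) : t = 0 := by
  induction t using Multiset.induction with
  | empty => rfl
  | cons a s ih =>
    have := h1 a (Multiset.mem_cons_self a s)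
    simp only [Multiset.sum_cons] at h
    omega

lemma msum_pos (t : Multiset ℕ) (h1 : ∀ n ∈ t, 1 ≤ n) :
    ∀ a ∈ t, 1 ≤ t.sum := by
  intro a ha
  have := Multiset.single_le_sum (fun x _ => Nat.zero_le x) a ha
  have := h1 a ha
  omega

lemma msum_classify : ∀ (N : ℕ), N ≤ 4 → ∀ (t : Multiset ℕ), (∀ n ∈ t, 1 ≤ n) → t.sum = N →
    (N = 0 → t = 0) ∧
    (N = 1 → t = {1}) ∧
    (N = 2 → t = {2} ∨ t = {1, 1}) ∧
    (N = 3 → t = {3} ∨ t = {2, 1} ∨ t = {1, 1, 1}) ∧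
    (N = 4 → t = {4} ∨ t = {3, 1} ∨ t = {2, 2} ∨ t = {2, 1, 1} ∨ t = {1, 1, 1, 1}) := by
  intro N
  induction N using Nat.strong_induction_on with
  | _ N ih =>
    intro hN t h1 hsum
    induction t using Multiset.induction with
    | empty =>
      simp only [Multiset.sum_zero] at hsum
      subst hsum
      refine ⟨fun _ => rfl, ?_, ?_, ?_, ?_⟩ <;> intro h <;> omega
    | cons a s _ =>
      have ha := h1 a (Multiset.mem_cons_self a s)
      have hs1 : ∀ n ∈ s, 1 ≤ n := fun n hn => h1 n (Multiset.mem_cons_of_mem hn)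
      simp only [Multiset.sum_cons] at hsum
      have haN : a ≤ N := by omega
      have hrec := ih (N - a) (by omega) (by omega) s hs1 (by omega)
      refine ⟨?_, ?_, ?_, ?_, ?_⟩ <;> intro hNe <;> subst hNe
      · omega
      · have : a = 1 := by omega
        subst this
        have := hrec.1 (by omega)
        rw [this]
        rfl
      · interval_cases a
        · have := hrec.2.1 (by omega)
          rw [this]; right; rfl
        · have := hrec.1 (by omega)
          rw [this]; left; rfl
      · interval_cases a
        · rcases hrec.2.2.1 (by omega) with h | h <;> rw [h]
          · right; left; exact Multiset.cons_swap _ _ _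
          · right; right; rfl
        · have := hrec.2.1 (by omega)
          rw [this]; right; left; rfl
        · have := hrec.1 (by omega)
          rw [this]; left; rfl
      · interval_cases a
        · rcases hrec.2.2.2.1 (by omega) with h | h | h <;> rw [h]
          · right; left; exact Multiset.cons_swap _ _ _
          · right; right; right; left
            refine (Multiset.cons_swap _ _ _).trans ?_
            rfl
          · right; right; right; right; rfl
        · rcases hrec.2.2.1 (by omega) with h | h <;> rw [h]
          · right; right; left; rfl
          · right; right; right; left; rfl
        · have := hrec.2.1 (by omega)
          rw [this]; right; left; rfl
        · have := hrec.1 (by omega)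
          rw [this]; left; rfl

lemma msum_four (t : Multiset ℕ) (h1 : ∀ n ∈ t, 1 ≤ n) (h : t.sum = 4) :
    t = {4} ∨ t = {3, 1} ∨ t = {2, 2} ∨ t = {2, 1, 1} ∨ t = {1, 1, 1, 1} :=
  (msum_classify 4 (le_refl _) t h1 h).2.2.2.2 rfl

lemma msum_two (t : Multiset ℕ) (h1 : ∀ n ∈ t, 1 ≤ n) (h : t.sum = 2) :
    t = {2} ∨ t = {1, 1} :=
  (msum_classify 2 (by omega) t h1 h).2.2.1 rfl

end NatPart

section PMap
variable {D : ℕ} {β : ℤ → OK} {v : ℤ → ℤ} (hβ : BetaSeq D β v) (j : ℤ)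

/-- coordinates (m, n) ↦ m β_{j-1} + n β_j -/
def pmap (β : ℤ → OK) (j : ℤ) : ℤ × ℤ → OK := fun p => p.1 • β (j-1) + p.2 • β j

include hβ

lemma pmap_inj : Function.Injective (pmap β j) := by
  intro p q h
  have h1 := congrArg (emb1 D) h
  have h2 := congrArg (emb2 D) h
  simp only [pmap, emb1_add, emb2_add, emb1_zsmul, emb2_zsmul] at h1 h2
  set A1 := emb1 D (β (j-1)); set B1 := emb1 D (β j)
  set A2 := emb2 D (β (j-1)); set B2 := emb2 D (β j)
  have hA1 : 0 < A1 := B1_pos hβ (j-1)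
  have hB1 : 0 < B1 := B1_pos hβ j
  have hA2 : 0 < A2 := B2_pos hβ (j-1)
  have hB2 : 0 < B2 := B2_pos hβ j
  have hlt1 : A1 < B1 := B1_lt hβ (by omega)
  have hlt2 : B2 < A2 := B2_lt hβ (by omega)
  have e1 : ((p.1 - q.1 : ℤ) : ℝ) * A1 = ((q.2 - p.2 : ℤ) : ℝ) * B1 := by push_cast; linarith
  have e2 : ((p.1 - q.1 : ℤ) : ℝ) * A2 = ((q.2 - p.2 : ℤ) : ℝ) * B2 := by push_cast; linarith
  have hz : ((p.1 - q.1 : ℤ) : ℝ) * (A1 * B2 - A2 * B1) = 0 := by nlinarith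
  have hneg : A1 * B2 - A2 * B1 < 0 := by nlinarith
  have hm : ((p.1 - q.1 : ℤ) : ℝ) = 0 := by
    rcases mul_eq_zero.mp hz with h | h
    · exact h
    · linarith
  have hm' : p.1 = q.1 := by
    have : (p.1 - q.1 : ℤ) = 0 := by exact_mod_cast hm
    omega
  have hn' : p.2 = q.2 := by
    rw [hm] at e1
    simp only [zero_mul] at e1
    have : ((q.2 - p.2 : ℤ) : ℝ) = 0 := by
      rcases mul_eq_zero.mp e1.symm with h | h
      · exact h
      · linarith
    have : (q.2 - p.2 : ℤ) = 0 := by exact_mod_cast this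
    omega
  exact Prod.ext hm' hn'

end PMap

/-- `pmap` as an additive hom -/
def pmapHom (β : ℤ → OK) (j : ℤ) : ℤ × ℤ →+ OK := AddMonoidHom.mk' (pmap β j) (by
  intro p q
  simp only [pmap, Prod.fst_add, Prod.snd_add, add_zsmul]
  abel)

section Fin
variable {D : ℕ}

lemma sqrt_ge_one (hD : 2 ≤ D) : (1:ℝ) ≤ Real.sqrt D := by
  rw [show (1:ℝ) = Real.sqrt 1 by simp]
  apply Real.sqrt_le_sqrt
  exact_mod_cast (by omega : 1 ≤ D)

lemma omega_sub (hD : 2 ≤ D) : 1 ≤ omegaD D - omegaD' D := by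
  have h := sqrt_ge_one hD
  by_cases h1 : D % 4 = 1 <;> simp [omegaD, omegaD', h1] <;> linarith

lemma omega_add : omegaD D + omegaD' D = if D % 4 = 1 then 1 else 0 := by
  by_cases h1 : D % 4 = 1 <;> simp [omegaD, omegaD', h1] <;> ring

lemma part_coord_bound (hD : 2 ≤ D) {x : OK} (hx : TotPos D x)
    {A1 A2 : ℝ} (h1 : emb1 D x ≤ A1) (h2 : emb2 D x ≤ A2) :
    |(x.1 : ℝ)| ≤ A1 + A2 ∧ |(x.2 : ℝ)| ≤ A1 + A2 := by
  have he1 : (0:ℝ) < emb1 D x := hx.1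
  have he2 : (0:ℝ) < emb2 D x := hx.2
  have hsub := omega_sub hD
  have hadd : 0 ≤ omegaD D + omegaD' D ∧ omegaD D + omegaD' D ≤ 1 := by
    rw [omega_add]; split <;> norm_num
  have hd1 : emb1 D x - emb2 D x = x.2 * (omegaD D - omegaD' D) := by
    simp only [emb1, emb2]; ring
  have hy : |(x.2 : ℝ)| ≤ A1 + A2 := by
    rw [abs_le]
    constructor <;> nlinarith [abs_nonneg (x.2:ℝ), le_abs_self (x.2:ℝ), neg_abs_le (x.2:ℝ)]
  refine ⟨?_, hy⟩
  have hd2 : emb1 D x + emb2 D x = 2 * x.1 + x.2 * (omegaD D + omegaD' D) := by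
    simp only [emb1, emb2]; ring
  rw [abs_le]
  constructor <;> nlinarith [le_abs_self (x.2:ℝ), neg_abs_le (x.2:ℝ)]

lemma parts_finite (hD : 2 ≤ D) (α : OK) (hα : TotPos D α) :
    Set.Finite {s : Multiset OK | (∀ x ∈ s, TotPos D x) ∧ s.sum = α} := by
  classical
  set N : ℕ := (trOK D α).toNat with hN
  set P : Finset OK := Finset.Icc (-(N:ℤ), -(N:ℤ)) ((N:ℤ), (N:ℤ)) with hP
  set big : Multiset OK := N • P.val with hbig
  apply Set.Finite.subset (Set.finite_coe_iff.mp ?_ : (↑big.powerset.toFinset : Set (Multiset OK)).Finite)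
  swap
  · exact Set.finite_coe_iff.mpr (big.powerset.toFinset.finite_toSet)
  intro s hs
  obtain ⟨hpos, hsum⟩ := hs
  simp only [Finset.coe_sort_coe, Multiset.mem_toFinset, Set.mem_setOf_eq, Finset.mem_coe]
  rw [Multiset.mem_powerset]
  -- trace facts
  have htrace : (s.map (trOK D)).sum = trOK D α := by
    rw [← hsum, ← map_multiset_sum]
  have hcard : (Multiset.card s : ℤ) ≤ trOK D α := by
    rw [← htrace]
    have := card_le_sum_int (t := s.map (trOK D)) (by
      intro n hn
      obtain ⟨x, hx, rfl⟩ := Multiset.mem_map.mp hn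
      exact tr_pos (hpos x hx))
    rwa [Multiset.card_map] at this
  have htrα : 1 ≤ trOK D α := tr_pos hα
  have hcardN : Multiset.card s ≤ N := by omega
  -- each part is in P
  have hmem : ∀ x ∈ s, x ∈ P := by
    intro x hx
    obtain ⟨s', rfl⟩ := Multiset.exists_cons_of_mem hx
    have hrest1 : 0 ≤ emb1 D s'.sum := by
      rw [show emb1 D s'.sum = (e1hom D) s'.sum from rfl, map_multiset_sum]
      apply Multiset.sum_nonneg
      intro y hy
      obtain ⟨z, hz, rfl⟩ := Multiset.mem_map.mp hy
      exact le_of_lt (hpos z (Multiset.mem_cons_of_mem hz)).1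
    have hrest2 : 0 ≤ emb2 D s'.sum := by
      rw [show emb2 D s'.sum = (e2hom D) s'.sum from rfl, map_multiset_sum]
      apply Multiset.sum_nonneg
      intro y hy
      obtain ⟨z, hz, rfl⟩ := Multiset.mem_map.mp hy
      exact le_of_lt (hpos z (Multiset.mem_cons_of_mem hz)).2
    have he1 : emb1 D x ≤ emb1 D α := by
      rw [← hsum, Multiset.sum_cons, emb1_add]; linarith
    have he2 : emb2 D x ≤ emb2 D α := by
      rw [← hsum, Multiset.sum_cons, emb2_add]; linarith
    have hxpos := hpos x (Multiset.mem_cons_self x s')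
    obtain ⟨hb1, hb2⟩ := part_coord_bound hD hxpos he1 he2
    have hAA : emb1 D α + emb2 D α = (trOK D α : ℝ) := (tr_eq D α).symm
    have hNe : (N : ℤ) = trOK D α := by rw [hN]; omega
    have hNr : emb1 D α + emb2 D α = ((N:ℤ) : ℝ) := by rw [hAA, hNe]
    rw [hNr] at hb1 hb2
    have hx1 : -(N:ℤ) ≤ x.1 ∧ x.1 ≤ (N:ℤ) := by
      obtain ⟨ha, hb⟩ := abs_le.mp hb1
      exact ⟨by exact_mod_cast ha, by exact_mod_cast hb⟩
    have hx2 : -(N:ℤ) ≤ x.2 ∧ x.2 ≤ (N:ℤ) := by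
      obtain ⟨ha, hb⟩ := abs_le.mp hb2
      exact ⟨by exact_mod_cast ha, by exact_mod_cast hb⟩
    rw [hP, Finset.mem_Icc]
    refine ⟨?_, ?_⟩ <;> rw [Prod.le_def] <;>
      exact ⟨by tauto, by tauto⟩
  -- conclude s ≤ big
  rw [Multiset.le_iff_count]
  intro x
  by_cases hx : x ∈ s
  · have h1 : Multiset.count x s ≤ N := le_trans (Multiset.count_le_card x s) hcardN
    rw [hbig, Multiset.count_nsmul]
    have hmemP : x ∈ P := hmem x hx
    have hone : 1 ≤ Multiset.count x P.val :=
      Multiset.one_le_count_iff_mem.mpr (Finset.mem_val.mpr hmemP)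
    calc Multiset.count x s ≤ N := h1
      _ = N * 1 := (mul_one N).symm
      _ ≤ N * Multiset.count x P.val := Nat.mul_le_mul_left N hone
  · simp [Multiset.count_eq_zero_of_notMem hx]

end Fin

section Assemble
variable {D : ℕ} {β : ℤ → OK} {v : ℤ → ℤ} (hβ : BetaSeq D β v) (j : ℤ)

/-- from a partition refining to `4 β_j` parts all equal to `β j`, extract integer partition -/
lemma shapeA (t : Multiset (Multiset OK)) (ht : ∀ m ∈ t, m ≠ 0)
    (hjoin : t.join = Multiset.replicate 4 (β j)) :
    ∃ tn : Multiset ℕ, (∀ n ∈ tn, 1 ≤ n) ∧ tn.sum = 4 ∧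
      t.map Multiset.sum = tn.map (fun n : ℕ => ((n:ℤ)) • β j) := by
  have hel : ∀ m ∈ t, m.sum = ((Multiset.card m : ℤ)) • β j := by
    intro m hm
    have hle := mem_le_join hm
    rw [hjoin] at hle
    have : ∀ y ∈ m, y = β j := by
      intro y hy
      exact Multiset.eq_of_mem_replicate (Multiset.mem_of_le hle hy)
    rw [Multiset.eq_replicate_card.mpr this, Multiset.sum_replicate, Multiset.card_replicate]
    rw [natCast_zsmul]
  refine ⟨t.map Multiset.card, ?_, ?_, ?_⟩
  · intro n hn
    obtain ⟨m, hm, rfl⟩ := Multiset.mem_map.mp hn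
    have := ht m hm
    rcases Nat.eq_zero_or_pos (Multiset.card m) with h | h
    · exact absurd (Multiset.card_eq_zero.mp h) this
    · omega
  · have := Multiset.card_join t
    rw [hjoin, Multiset.card_replicate] at this
    omega
  · rw [Multiset.map_map]
    exact Multiset.map_congr rfl hel

include hβ

omit hβ in
lemma pos_comb_real {q r w A B C : ℝ} (hq : 0 ≤ q) (hr : 0 ≤ r) (hw : 0 ≤ w)
    (hs : 1 ≤ q + r + w) (hA : 0 < A) (hB : 0 < B) (hC : 0 < C) :
    0 < q * A + r * B + w * C := by
  rcases le_or_gt (1/3) q with h | h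
  · nlinarith [mul_le_mul_of_nonneg_right h hA.le, mul_nonneg hr hB.le, mul_nonneg hw hC.le]
  rcases le_or_gt (1/3) r with h' | h'
  · nlinarith [mul_le_mul_of_nonneg_right h' hB.le, mul_nonneg hq hA.le, mul_nonneg hw hC.le]
  · have h'' : 1/3 ≤ w := by linarith
    nlinarith [mul_le_mul_of_nonneg_right h'' hC.le, mul_nonneg hq hA.le, mul_nonneg hr hB.le]

lemma totpos_comb {p : ℤ × ℤ} {q r w : ℤ} (hq : 0 ≤ q) (hr : 0 ≤ r) (hw : 0 ≤ w)
    (hsum : 1 ≤ q + r + w)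
    (h : pmap β j p = q • β (j-1) + r • β j + w • β (j+1)) :
    TotPos D (pmap β j p) := by
  rw [h]
  constructor
  · rw [emb1_add, emb1_add, emb1_zsmul, emb1_zsmul, emb1_zsmul]
    have h1 := B1_pos hβ (j-1); have h2 := B1_pos hβ j; have h3 := B1_pos hβ (j+1)
    have hq' : (0:ℝ) ≤ q := by exact_mod_cast hq
    have hr' : (0:ℝ) ≤ r := by exact_mod_cast hr
    have hw' : (0:ℝ) ≤ w := by exact_mod_cast hw
    have hs' : (1:ℝ) ≤ q + r + w := by exact_mod_cast hsum
    exact pos_comb_real hq' hr' hw' hs' h1 h2 h3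
  · rw [emb2_add, emb2_add, emb2_zsmul, emb2_zsmul, emb2_zsmul]
    have h1 := B2_pos hβ (j-1); have h2 := B2_pos hβ j; have h3 := B2_pos hβ (j+1)
    have hq' : (0:ℝ) ≤ q := by exact_mod_cast hq
    have hr' : (0:ℝ) ≤ r := by exact_mod_cast hr
    have hw' : (0:ℝ) ≤ w := by exact_mod_cast hw
    have hs' : (1:ℝ) ≤ q + r + w := by exact_mod_cast hsum
    exact pos_comb_real hq' hr' hw' hs' h1 h2 h3

lemma mem_S_of (t : Multiset (ℤ × ℤ)) (hpos : ∀ p ∈ t, TotPos D (pmap β j p))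
    (hsum : pmap β j t.sum = (4:ℤ) • β j) :
    (t.map (pmap β j)) ∈ {s : Multiset OK | (∀ x ∈ s, TotPos D x) ∧ s.sum = (4:ℤ) • β j} := by
  constructor
  · intro x hx
    obtain ⟨p, hp, rfl⟩ := Multiset.mem_map.mp hx
    exact hpos p hp
  · have : (t.map (pmap β j)).sum = pmapHom β j t.sum := by
      rw [map_multiset_sum]
      rfl
    rw [this]
    exact hsum

end Assemble

section Key
variable {D : ℕ} {β : ℤ → OK} {v : ℤ → ℤ} (hβ : BetaSeq D β v) (j : ℤ)
include hβ

lemma pmap_key (m n q r w : ℤ) (hm : m = q - w) (hn : n = r + w * (v j)) :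
    pmap β j (m, n) = q • β (j-1) + r • β j + w • β (j+1) := by
  have hr := hβ.rel j
  have h1 := congrArg Prod.fst hr
  have h2 := congrArg Prod.snd hr
  subst hm hn
  simp only [Prod.smul_fst, Prod.smul_snd, Prod.fst_add, Prod.snd_add, smul_eq_mul] at h1 h2
  refine Prod.ext ?_ ?_ <;>
    simp only [pmap, Prod.smul_fst, Prod.smul_snd, Prod.fst_add, Prod.snd_add, smul_eq_mul]
  · linear_combination w * h1
  · linear_combination w * h2

/-- TotPos of `pmap` values given nonneg combination data -/
lemma pmap_totpos (m n q r w : ℤ) (hm : m = q - w) (hn : n = r + w * (v j))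
    (hq : 0 ≤ q) (hr : 0 ≤ r) (hw : 0 ≤ w) (hs : 1 ≤ q + r + w) :
    TotPos D (pmap β j (m, n)) :=
  totpos_comb hβ j hq hr hw hs (pmap_key hβ j m n q r w hm hn)

lemma pmap_four : pmap β j ((0:ℤ), (4:ℤ)) = (4:ℤ) • β j := by
  simp [pmap]

/-- main subset extraction: any partition of `4 β_j` whose refinement is `β_j^4` -/
lemma sub_of_replicate (s : Multiset OK)
    (hs : (∀ x ∈ s, TotPos D x) ∧ s.sum = (4:ℤ) • β j)
    (hclass : ∀ m : Multiset OK, (∀ y ∈ m, Indec D y) → m.sum = (4:ℤ) • β j →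
      m = Multiset.replicate 4 (β j) ∨ m = {β (j-1), β (j+1)}) :
    (∃ tn : Multiset ℕ, (∀ n ∈ tn, 1 ≤ n) ∧ tn.sum = 4 ∧
        s = tn.map (fun n : ℕ => ((n:ℤ)) • β j)) ∨
    s = {β (j-1), β (j+1)} ∨ s = {β (j-1) + β (j+1)} := by
  obtain ⟨t, ht, hts⟩ := refine_multiset s hs.1
  have hjsum : t.join.sum = (4:ℤ) • β j := by
    rw [Multiset.sum_join, hts, hs.2]
  have hjind : ∀ y ∈ t.join, Indec D y := by
    intro y hy
    obtain ⟨m, hm, hym⟩ := Multiset.mem_join.mp hy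
    exact (ht m hm).1 y hym
  rcases hclass t.join hjind hjsum with hj | hj
  · left
    obtain ⟨tn, h1, h2, h3⟩ := shapeA j t (fun m hm => (ht m hm).2) hj
    exact ⟨tn, h1, h2, by rw [← hts, h3]⟩
  · right
    have hcards : (t.map Multiset.card).sum = 2 := by
      have := Multiset.card_join t
      rw [hj] at this
      simp [Multiset.insert_eq_cons] at this
      omega
    have hone : ∀ n ∈ t.map Multiset.card, 1 ≤ n := by
      intro n hn
      obtain ⟨m, hm, rfl⟩ := Multiset.mem_map.mp hn
      have := (ht m hm).2
      rcases Nat.eq_zero_or_pos (Multiset.card m) with h | h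
      · exact absurd (Multiset.card_eq_zero.mp h) this
      · omega
    rcases msum_two _ hone hcards with h2 | h2
    · -- one block, equal to the whole join
      right
      have hc1 : Multiset.card t = 1 := by
        have := congrArg Multiset.card h2
        simpa using this
      obtain ⟨m, hm⟩ := Multiset.card_eq_one.mp hc1
      have hmj : m = t.join := by
        have hle := mem_le_join (show m ∈ t by rw [hm]; simp)
        apply Multiset.eq_of_le_of_card_le hle
        rw [hj]
        have hcm : Multiset.card m = 2 := by
          rw [hm] at h2
          simp at h2
          omega
        simp [Multiset.insert_eq_cons, hcm]
      rw [← hts, hm]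
      simp only [Multiset.map_singleton]
      rw [hmj, hj]
      congr 1
      simp [Multiset.insert_eq_cons]
    · -- two singleton blocks
      left
      have hc2 : Multiset.card t = 2 := by
        have := congrArg Multiset.card h2
        simpa using this
      obtain ⟨m1, m2, hm⟩ := Multiset.card_eq_two.mp hc2
      have hcard1 : ∀ m' ∈ t, Multiset.card m' = 1 := by
        intro m' hm'
        have : Multiset.card m' ∈ t.map Multiset.card := Multiset.mem_map_of_mem _ hm'
        rw [h2] at this
        simpa using this
      obtain ⟨x, hx⟩ := Multiset.card_eq_one.mp (hcard1 m1 (by rw [hm]; simp))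
      obtain ⟨y, hy⟩ := Multiset.card_eq_one.mp (hcard1 m2 (by rw [hm]; simp))
      have hjoin2 : t.join = {x, y} := by
        rw [hm, hx, hy]
        simp [Multiset.insert_eq_cons]
      have hxy : ({x, y} : Multiset OK) = {β (j-1), β (j+1)} := by rw [← hjoin2, hj]
      rw [← hts, hm, hx, hy]
      simp only [Multiset.insert_eq_cons, Multiset.map_cons, Multiset.map_singleton,
        Multiset.sum_singleton]
      simpa [Multiset.insert_eq_cons] using hxy

end Key

def F5 : Finset (Multiset (ℤ × ℤ)) :=
  { {(0,4)}, {(0,3),(0,1)}, {(0,2),(0,2)}, {(0,2),(0,1),(0,1)}, {(0,1),(0,1),(0,1),(0,1)} }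

def F6 : Finset (Multiset (ℤ × ℤ)) := insert {(1,0),(-1,4)} F5

def F8 : Finset (Multiset (ℤ × ℤ)) :=
  F5 ∪ { {(1,0),(0,1),(-1,3)}, {(1,1),(-1,3)}, {(1,0),(-1,4)} }

def F16 : Finset (Multiset (ℤ × ℤ)) :=
  F5 ∪ { {(1,0),(-1,2),(0,1),(0,1)}, {(1,1),(-1,2),(0,1)}, {(-1,3),(1,0),(0,1)},
    {(0,2),(1,0),(-1,2)}, {(1,1),(-1,3)}, {(-1,4),(1,0)}, {(1,2),(-1,2)},
    {(1,0),(1,0),(-1,2),(-1,2)}, {(2,0),(-1,2),(-1,2)}, {(-2,4),(1,0),(1,0)},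
    {(2,0),(-2,4)} }


lemma F5_sum : ∀ T ∈ F5, T.sum = ((0:ℤ),(4:ℤ)) := by decide
lemma F6_sum : ∀ T ∈ F6, T.sum = ((0:ℤ),(4:ℤ)) := by decide
lemma F8_sum : ∀ T ∈ F8, T.sum = ((0:ℤ),(4:ℤ)) := by decide
lemma F16_sum : ∀ T ∈ F16, T.sum = ((0:ℤ),(4:ℤ)) := by decide

lemma F5_pairs : ∀ T ∈ F5, ∀ p ∈ T, p.1 = 0 ∧ 1 ≤ p.2 := by decide
lemma F6_pairs : ∀ T ∈ F6, ∀ p ∈ T,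
    (p.1 = 0 ∧ 1 ≤ p.2) ∨ p = (1,0) ∨ p = (-1,4) := by decide
lemma F8_pairs : ∀ T ∈ F8, ∀ p ∈ T,
    (p.1 = 0 ∧ 1 ≤ p.2) ∨ p = (1,0) ∨ p = (1,1) ∨ p = (-1,3) ∨ p = (-1,4) := by decide
lemma F16_pairs : ∀ T ∈ F16, ∀ p ∈ T,
    (p.1 = 0 ∧ 1 ≤ p.2) ∨ p = (1,0) ∨ p = (1,1) ∨ p = (1,2) ∨ p = (2,0) ∨
    p = (-1,2) ∨ p = (-1,3) ∨ p = (-1,4) ∨ p = (-2,4) := by decide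

section Main
variable {D : ℕ} {β : ℤ → OK} {v : ℤ → ℤ} (hβ : BetaSeq D β v) (j : ℤ)
include hβ

lemma not_pair_sum {V : ℝ} (hV : V * emb1 D (β j) = 4 * emb1 D (β j)) (h5 : (5:ℝ) ≤ V) :
    False := by
  have := B1_pos hβ j
  nlinarith

lemma pair_sum_emb (h : β (j-1) + β (j+1) = (4:ℤ) • β j) :
    (v j : ℝ) * emb1 D (β j) = 4 * emb1 D (β j) := by
  have h1 := congrArg (emb1 D) h
  rw [emb1_add, emb1_zsmul] at h1
  rw [rel1 hβ j]
  rw [h1]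
  norm_num

theorem stmt15' (hD : 2 ≤ D) :
    (5 ≤ v j → pK D ((4:ℤ) • β j) = 5) ∧
    (v j = 4 → pK D ((4:ℤ) • β j) = 6) ∧
    (v j = 3 → 8 ≤ pK D ((4:ℤ) • β j)) ∧
    (v j = 2 → 16 ≤ pK D ((4:ℤ) • β j)) := by
  classical
  have hinj : Function.Injective (Multiset.map (pmap β j)) :=
    Multiset.map_injective (pmap_inj hβ j)
  have hP0 : ∀ n : ℤ, 1 ≤ n → TotPos D (pmap β j (0, n)) := fun n hn =>
    pmap_totpos hβ j 0 n 0 n 0 (by ring) (by ring) (by norm_num) (by omega) (by norm_num)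
      (by omega)
  have h4pos : TotPos D ((4:ℤ) • β j) := by
    rw [← pmap_four hβ j]
    exact hP0 4 (by norm_num)
  have hfin : Set.Finite {s : Multiset OK | (∀ x ∈ s, TotPos D x) ∧ s.sum = (4:ℤ) • β j} :=
    parts_finite hD _ h4pos
  have hpk : pK D ((4:ℤ) • β j)
      = Set.ncard {s : Multiset OK | (∀ x ∈ s, TotPos D x) ∧ s.sum = (4:ℤ) • β j} := rfl
  -- converting the tn-case into image form
  have himage : ∀ (tn : Multiset ℕ) (s : Multiset OK),
      s = tn.map (fun n : ℕ => ((n:ℤ)) • β j) →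
      s = Multiset.map (pmap β j) (tn.map (fun n : ℕ => ((0:ℤ), (n:ℤ)))) := by
    intro tn s hts
    rw [Multiset.map_map, hts]
    apply Multiset.map_congr rfl
    intro n _
    simp [pmap, Function.comp]
  have hPa : TotPos D (pmap β j (1, 0)) :=
    pmap_totpos hβ j 1 0 1 0 0 (by ring) (by ring) (by norm_num) (by norm_num) (by norm_num)
      (by norm_num)
  have hP11 : TotPos D (pmap β j (1, 1)) :=
    pmap_totpos hβ j 1 1 1 1 0 (by ring) (by ring) (by norm_num) (by norm_num) (by norm_num)
      (by norm_num)
  refine ⟨?_, ?_, ?_, ?_⟩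
  -- case v ≥ 5
  · intro h5
    have hchar : {s : Multiset OK | (∀ x ∈ s, TotPos D x) ∧ s.sum = (4:ℤ) • β j}
        = (Multiset.map (pmap β j)) '' ↑F5 := by
      apply Set.Subset.antisymm
      · intro s hs
        rcases sub_of_replicate hβ j s hs
          (fun m h1 h2 => Or.inl (classify5 hβ j h5 m h1 h2)) with ⟨tn, ht1, ht2, ht3⟩ | h | h
        · refine ⟨tn.map (fun n : ℕ => ((0:ℤ), (n:ℤ))), ?_, (himage tn s ht3).symm⟩
          rcases msum_four tn ht1 ht2 with h | h | h | h | h <;> subst h <;>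
            exact Finset.mem_coe.mpr (by decide)
        · exfalso
          have hsum2 : β (j-1) + β (j+1) = (4:ℤ) • β j := by
            have := hs.2
            rw [h] at this
            simpa [Multiset.insert_eq_cons] using this
          exact not_pair_sum hβ j (pair_sum_emb hβ j hsum2)
            (by exact_mod_cast (show (5:ℤ) ≤ v j from h5))
        · exfalso
          have hsum2 : β (j-1) + β (j+1) = (4:ℤ) • β j := by
            have := hs.2
            rw [h] at this
            simpa using this
          exact not_pair_sum hβ j (pair_sum_emb hβ j hsum2)
            (by exact_mod_cast (show (5:ℤ) ≤ v j from h5))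
      · rintro s ⟨T, hT, rfl⟩
        have hT' : T ∈ F5 := Finset.mem_coe.mp hT
        apply mem_S_of hβ j
        · intro p hp
          obtain ⟨h1, h2⟩ := F5_pairs T hT' p hp
          have : p = ((0:ℤ), p.2) := Prod.ext h1 rfl
          rw [this]
          exact hP0 p.2 h2
        · rw [F5_sum T hT']
          exact pmap_four hβ j
    rw [hpk, hchar, Set.ncard_image_of_injective _ hinj, Set.ncard_coe_finset]
    decide
  -- case v = 4
  · intro hv
    have e_c : pmap β j (-1, 4) = β (j+1) := by
      rw [pmap_key hβ j (-1) 4 0 0 1 (by ring) (by rw [hv]; ring)]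
      simp
    have e_a : pmap β j (1, 0) = β (j-1) := by
      rw [pmap_key hβ j 1 0 1 0 0 (by ring) (by ring)]
      simp
    have hac : β (j-1) + β (j+1) = (4:ℤ) • β j := by
      have := hβ.rel j
      rw [hv] at this
      rw [← this]
    have hchar : {s : Multiset OK | (∀ x ∈ s, TotPos D x) ∧ s.sum = (4:ℤ) • β j}
        = (Multiset.map (pmap β j)) '' ↑F6 := by
      apply Set.Subset.antisymm
      · intro s hs
        rcases sub_of_replicate hβ j s hs (classify4 hβ j hv) with ⟨tn, ht1, ht2, ht3⟩ | h | h
        · refine ⟨tn.map (fun n : ℕ => ((0:ℤ), (n:ℤ))), ?_, (himage tn s ht3).symm⟩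
          rcases msum_four tn ht1 ht2 with h | h | h | h | h <;> subst h <;>
            exact Finset.mem_coe.mpr (by decide)
        · refine ⟨{(1,0),(-1,4)}, Finset.mem_coe.mpr (by decide), ?_⟩
          rw [h]
          simp [Multiset.insert_eq_cons, e_a, e_c]
        · refine ⟨{(0,4)}, Finset.mem_coe.mpr (by decide), ?_⟩
          rw [h]
          simp only [Multiset.map_singleton, pmap_four hβ j]
          rw [hac]
      · rintro s ⟨T, hT, rfl⟩
        have hT' : T ∈ F6 := Finset.mem_coe.mp hT
        apply mem_S_of hβ j
        · intro p hp
          rcases F6_pairs T hT' p hp with ⟨h1, h2⟩ | h | h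
          · have : p = ((0:ℤ), p.2) := Prod.ext h1 rfl
            rw [this]
            exact hP0 p.2 h2
          · rw [h]; exact hPa
          · rw [h, e_c]; exact (hβ.indec (j+1)).1
        · rw [F6_sum T hT']
          exact pmap_four hβ j
    rw [hpk, hchar, Set.ncard_image_of_injective _ hinj, Set.ncard_coe_finset]
    decide
  -- case v = 3
  · intro hv
    have e_c : pmap β j (-1, 3) = β (j+1) := by
      rw [pmap_key hβ j (-1) 3 0 0 1 (by ring) (by rw [hv]; ring)]
      simp
    have e_cb : pmap β j (-1, 4) = β j + β (j+1) := by
      rw [pmap_key hβ j (-1) 4 0 1 1 (by ring) (by rw [hv]; ring)]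
      simp
    have hsub : (Multiset.map (pmap β j)) '' ↑F8
        ⊆ {s : Multiset OK | (∀ x ∈ s, TotPos D x) ∧ s.sum = (4:ℤ) • β j} := by
      rintro s ⟨T, hT, rfl⟩
      have hT' : T ∈ F8 := Finset.mem_coe.mp hT
      apply mem_S_of hβ j
      · intro p hp
        rcases F8_pairs T hT' p hp with ⟨h1, h2⟩ | h | h | h | h
        · have : p = ((0:ℤ), p.2) := Prod.ext h1 rfl
          rw [this]
          exact hP0 p.2 h2
        · rw [h]; exact hPa
        · rw [h]; exact hP11
        · rw [h, e_c]; exact (hβ.indec (j+1)).1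
        · rw [h, e_cb]; exact totpos_add (hβ.indec j).1 (hβ.indec (j+1)).1
      · rw [F8_sum T hT']
        exact pmap_four hβ j
    rw [hpk]
    calc (8:ℕ) = ((Multiset.map (pmap β j)) '' ↑F8).ncard := by
          rw [Set.ncard_image_of_injective _ hinj, Set.ncard_coe_finset]
          decide
      _ ≤ _ := Set.ncard_le_ncard hsub hfin
  -- case v = 2
  · intro hv
    have e_c : pmap β j (-1, 2) = β (j+1) := by
      rw [pmap_key hβ j (-1) 2 0 0 1 (by ring) (by rw [hv]; ring)]
      simp
    have e_cb : pmap β j (-1, 3) = β j + β (j+1) := by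
      rw [pmap_key hβ j (-1) 3 0 1 1 (by ring) (by rw [hv]; ring)]
      simp
    have e_cb2 : pmap β j (-1, 4) = (2:ℤ) • β j + β (j+1) := by
      rw [pmap_key hβ j (-1) 4 0 2 1 (by ring) (by rw [hv]; ring)]
      simp
    have e_2c : pmap β j (-2, 4) = (2:ℤ) • β (j+1) := by
      rw [pmap_key hβ j (-2) 4 0 0 2 (by ring) (by rw [hv]; ring)]
      simp
    have e_ab2 : pmap β j (1, 2) = β (j-1) + (2:ℤ) • β j := by
      rw [pmap_key hβ j 1 2 1 2 0 (by ring) (by ring)]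
      simp
    have e_2a : pmap β j (2, 0) = (2:ℤ) • β (j-1) := by
      rw [pmap_key hβ j 2 0 2 0 0 (by ring) (by ring)]
      simp
    have htp2 : ∀ k : ℤ, TotPos D ((2:ℤ) • β k) := by
      intro k
      constructor
      · rw [emb1_zsmul]
        have := B1_pos hβ k
        norm_num
        linarith
      · rw [emb2_zsmul]
        have := B2_pos hβ k
        norm_num
        linarith
    have hsub : (Multiset.map (pmap β j)) '' ↑F16
        ⊆ {s : Multiset OK | (∀ x ∈ s, TotPos D x) ∧ s.sum = (4:ℤ) • β j} := by
      rintro s ⟨T, hT, rfl⟩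
      have hT' : T ∈ F16 := Finset.mem_coe.mp hT
      apply mem_S_of hβ j
      · intro p hp
        rcases F16_pairs T hT' p hp with ⟨h1, h2⟩ | h | h | h | h | h | h | h | h
        · have : p = ((0:ℤ), p.2) := Prod.ext h1 rfl
          rw [this]
          exact hP0 p.2 h2
        · rw [h]; exact hPa
        · rw [h]; exact hP11
        · rw [h, e_ab2]; exact totpos_add (hβ.indec (j-1)).1 (htp2 j)
        · rw [h, e_2a]; exact htp2 (j-1)
        · rw [h, e_c]; exact (hβ.indec (j+1)).1
        · rw [h, e_cb]; exact totpos_add (hβ.indec j).1 (hβ.indec (j+1)).1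
        · rw [h, e_cb2]; exact totpos_add (htp2 j) (hβ.indec (j+1)).1
        · rw [h, e_2c]; exact htp2 (j+1)
      · rw [F16_sum T hT']
        exact pmap_four hβ j
    rw [hpk]
    calc (16:ℕ) = ((Multiset.map (pmap β j)) '' ↑F16).ncard := by
          rw [Set.ncard_image_of_injective _ hinj, Set.ncard_coe_finset]
          decide
      _ ≤ _ := Set.ncard_le_ncard hsub hfin

end Main

/-- the number of partitions of `4β_j`. -/
theorem stmt15 (D : ℕ) (hD : 2 ≤ D) (hsq : Squarefree D)
    (β : ℤ → OK) (v : ℤ → ℤ) (hβ : BetaSeq D β v)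
    (j : ℤ) (α : OK) (hα : α = (4 : ℤ) • β j) :
    (5 ≤ v j → pK D α = 5) ∧
    (v j = 4 → pK D α = 6) ∧
    (v j = 3 → 8 ≤ pK D α) ∧
    (v j = 2 → 16 ≤ pK D α) := by
  subst hα
  exact stmt15' hβ j hD
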